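/- With the notation of the dynamic programming recursion (h₁ ≡ 0, h_i the value functions, g_i = f_i + h_i), suppose x_n* ∈ argmin_t g_n(t) and, for i = n−1 down to 1, x_i* ∈ argmin_t { g_i(t) + λ_i(t − x_{i+1}*)₊ + μ_i(x_{i+1}* − t)₊ }. Then (x₁*,…,x_n*) is a global minimizer of F(x) = Σᵢ fᵢ(xᵢ) + Σᵢ λᵢ(xᵢ−xᵢ₊₁)₊ + Σᵢ μᵢ(xᵢ₊₁−xᵢ)₊ over ℝⁿ. -/

import Mathlib

open Filter Topology Set

theorem stmt_18 (n : ℕ) (hn : 1 ≤ n) (f : ℕ → ℝ → ℝ)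
    (hfconv : ∀ i, ConvexOn ℝ Set.univ (f i))
    (hflev : ∀ i, ∃ α : ℝ,
      {x : ℝ | f i x ≤ α}.Nonempty ∧ Bornology.IsBounded {x : ℝ | f i x ≤ α})
    (lam mu : ℕ → ℝ) (hlam : ∀ i, 0 ≤ lam i) (hmu : ∀ i, 0 ≤ mu i)
    (h : ℕ → ℝ → ℝ) (hh1 : ∀ t : ℝ, h 1 t = 0)
    (hhrec : ∀ i, 2 ≤ i → i ≤ n → ∀ t : ℝ,
      IsLeast (Set.range fun s : ℝ =>
          f (i - 1) s + h (i - 1) s + lam (i - 1) * max (s - t) 0 + mu (i - 1) * max (t - s) 0)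
        (h i t))
    (xs : ℕ → ℝ)
    (hxn : ∀ t : ℝ, f n (xs n) + h n (xs n) ≤ f n t + h n t)
    (hback : ∀ i, 1 ≤ i → i ≤ n - 1 → ∀ t : ℝ,
      f i (xs i) + h i (xs i) + lam i * max (xs i - xs (i + 1)) 0
          + mu i * max (xs (i + 1) - xs i) 0
        ≤ f i t + h i t + lam i * max (t - xs (i + 1)) 0 + mu i * max (xs (i + 1) - t) 0) :
    ∀ x : ℕ → ℝ,
      (∑ j ∈ Finset.Icc 1 n, f j (xs j)) +
          (∑ j ∈ Finset.Icc 1 (n - 1),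
            (lam j * max (xs j - xs (j + 1)) 0 + mu j * max (xs (j + 1) - xs j) 0))
        ≤ (∑ j ∈ Finset.Icc 1 n, f j (x j)) +
            ∑ j ∈ Finset.Icc 1 (n - 1),
              (lam j * max (x j - x (j + 1)) 0 + mu j * max (x (j + 1) - x j) 0) := by
  intro x
  -- Lemma A: lower bound for every feasible x
  have lemA : ∀ i, 1 ≤ i → i ≤ n → ∀ y : ℕ → ℝ,
      f i (y i) + h i (y i) ≤ (∑ j ∈ Finset.Icc 1 i, f j (y j)) +
        ∑ j ∈ Finset.Icc 1 (i - 1),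
          (lam j * max (y j - y (j + 1)) 0 + mu j * max (y (j + 1) - y j) 0) := by
    intro i h1 hin y
    induction i with
    | zero => omega
    | succ k ih =>
      rcases Nat.eq_or_lt_of_le h1 with h1' | h1'
      · -- k + 1 = 1
        have hk : k = 0 := by omega
        subst hk
        simp [hh1]
      · have hk1 : 1 ≤ k := by omega
        have hkn : k ≤ n := by omega
        have ih' := ih hk1 hkn
        have hmem := hhrec (k+1) (by omega) hin (y (k+1))
        have hlb := hmem.2 ⟨y k, rfl⟩
        simp only [Nat.add_sub_cancel] at hlb
        have hsum1 : (∑ j ∈ Finset.Icc 1 (k+1), f j (y j)) =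
            (∑ j ∈ Finset.Icc 1 k, f j (y j)) + f (k+1) (y (k+1)) :=
          Finset.sum_Icc_succ_top (by omega) _
        have hsum2 : (∑ j ∈ Finset.Icc 1 ((k+1) - 1),
              (lam j * max (y j - y (j + 1)) 0 + mu j * max (y (j + 1) - y j) 0)) =
            (∑ j ∈ Finset.Icc 1 (k - 1),
              (lam j * max (y j - y (j + 1)) 0 + mu j * max (y (j + 1) - y j) 0))
            + (lam k * max (y k - y (k + 1)) 0 + mu k * max (y (k + 1) - y k) 0) := by
          have : (k+1) - 1 = (k-1) + 1 := by omega
          have hk' : k - 1 + 1 = k := by omega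
          rw [this, Finset.sum_Icc_succ_top (by omega), hk']
        rw [hsum1, hsum2]
        linarith
  -- Lemma B: value achieved by xs
  have lemB : ∀ i, 1 ≤ i → i ≤ n →
      (∑ j ∈ Finset.Icc 1 i, f j (xs j)) +
        (∑ j ∈ Finset.Icc 1 (i - 1),
          (lam j * max (xs j - xs (j + 1)) 0 + mu j * max (xs (j + 1) - xs j) 0))
        ≤ f i (xs i) + h i (xs i) := by
    intro i h1 hin
    induction i with
    | zero => omega
    | succ k ih =>
      rcases Nat.eq_or_lt_of_le h1 with h1' | h1'
      · have hk : k = 0 := by omega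
        subst hk
        simp [hh1]
      · have hk1 : 1 ≤ k := by omega
        have hkn : k ≤ n := by omega
        have ih' := ih hk1 hkn
        have hmem := hhrec (k+1) (by omega) hin (xs (k+1))
        obtain ⟨s0, hs0⟩ := hmem.1
        simp only [Nat.add_sub_cancel] at hs0
        have hb := hback k hk1 (by omega) s0
        have key : f k (xs k) + h k (xs k) + lam k * max (xs k - xs (k+1)) 0
            + mu k * max (xs (k+1) - xs k) 0 ≤ h (k+1) (xs (k+1)) := by
          rw [← hs0]; exact hb
        have hsum1 : (∑ j ∈ Finset.Icc 1 (k+1), f j (xs j)) =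
            (∑ j ∈ Finset.Icc 1 k, f j (xs j)) + f (k+1) (xs (k+1)) :=
          Finset.sum_Icc_succ_top (by omega) _
        have hsum2 : (∑ j ∈ Finset.Icc 1 ((k+1) - 1),
              (lam j * max (xs j - xs (j + 1)) 0 + mu j * max (xs (j + 1) - xs j) 0)) =
            (∑ j ∈ Finset.Icc 1 (k - 1),
              (lam j * max (xs j - xs (j + 1)) 0 + mu j * max (xs (j + 1) - xs j) 0))
            + (lam k * max (xs k - xs (k + 1)) 0 + mu k * max (xs (k + 1) - xs k) 0) := by
          have : (k+1) - 1 = (k-1) + 1 := by omega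
          have hk' : k - 1 + 1 = k := by omega
          rw [this, Finset.sum_Icc_succ_top (by omega), hk']
        rw [hsum1, hsum2]
        linarith
  have hB := lemB n hn le_rfl
  have hA := lemA n hn le_rfl x
  have hx := hxn (x n)
  linarith
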